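/- Consider the one-dimensional finite volume upwind scheme with interface velocities: on the uniform grid x_i := iΔx with interfaces x_{i+1/2} := (i + 1/2)Δx, given nonnegative weights (ρ_i^n)_{i∈ℤ} with Σ_i ρ_i^n = 1, set a_{i+1/2}^n := −Σ_{k∈ℤ} ρ_k^n s(x_{i+1/2} − x_k), where s(z) := sign(z) with s(0) := 0, and ρ_i^{n+1} := ρ_i^n − (Δt/Δx)[(a_{i+1/2}^n)⁺ ρ_i^n − (a_{i+1/2}^n)⁻ ρ_{i+1}^n − (a_{i−1/2}^n)⁺ ρ_{i−1}^n + (a_{i−1/2}^n)⁻ ρ_i^n]. If for some integers i_1 < i_2 one has ρ_{i_1}^n = ρ_{i_2}^n = 1/2 and ρ_i^n = 0 for all i ∉ {i_1, i_2}, then ρ_i^{n+1} = ρ_i^n for all i ∈ ℤ: the two Dirac masses are stationary for this scheme (whereas the exact solution moves them toward each other). -/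
import Mathlib


open scoped BigOperators

noncomputable section

/-- Positive part `r⁺ = max(r,0)`. -/
def pos (r : ℝ) : ℝ := max r 0

/-- Negative part `r⁻ = max(-r,0)`. -/
def neg (r : ℝ) : ℝ := max (-r) 0

lemma sgn_val (Δx : ℝ) (hΔx : 0 < Δx) (i k : ℤ) :
    Real.sign (((i : ℝ) + 1 / 2) * Δx - (k : ℝ) * Δx) = if k ≤ i then 1 else -1 := by
  have h : ((i : ℝ) + 1 / 2) * Δx - (k : ℝ) * Δx = ((i : ℝ) - k + 1 / 2) * Δx := by ring
  rw [h]
  split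
  · apply Real.sign_of_pos
    have : (k : ℝ) ≤ i := by exact_mod_cast ‹k ≤ i›
    nlinarith
  · apply Real.sign_of_neg
    have : (i : ℝ) + 1 ≤ k := by exact_mod_cast Int.add_one_le_iff.mpr (lt_of_not_ge ‹¬ k ≤ i›)
    nlinarith

/-- For the 1D finite volume upwind scheme with velocities computed at the interfaces
(for the potential `W(x) = |x|`), two Dirac masses of weight `1/2` are stationary. -/
theorem stmt15 (Δx Δt : ℝ) (hΔx : 0 < Δx) (hΔt : 0 < Δt)
    (ρ : ℤ → ℝ) (hpos : ∀ i, 0 ≤ ρ i) (hsum : HasSum ρ 1)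
    (i1 i2 : ℤ) (h12 : i1 < i2)
    (hi1 : ρ i1 = 1 / 2) (hi2 : ρ i2 = 1 / 2)
    (hzero : ∀ i, i ≠ i1 → i ≠ i2 → ρ i = 0)
    (ah : ℤ → ℝ)
    (hah : ∀ i : ℤ, ah i = -∑' k : ℤ, ρ k * Real.sign (((i : ℝ) + 1 / 2) * Δx - (k : ℝ) * Δx))
    (ρ' : ℤ → ℝ)
    (hρ' : ∀ i : ℤ, ρ' i = ρ i - (Δt / Δx) *
      (pos (ah i) * ρ i - neg (ah i) * ρ (i + 1)
        - pos (ah (i - 1)) * ρ (i - 1) + neg (ah (i - 1)) * ρ i)) :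
    ∀ i : ℤ, ρ' i = ρ i := by
  have hne : i1 ≠ i2 := ne_of_lt h12
  -- compute ah
  have hah' : ∀ i : ℤ, ah i = if i < i1 then 1 else if i < i2 then 0 else -1 := by
    intro i
    rw [hah i]
    have hts : ∑' k : ℤ, ρ k * Real.sign (((i : ℝ) + 1 / 2) * Δx - (k : ℝ) * Δx)
        = ∑ k ∈ ({i1, i2} : Finset ℤ), ρ k * Real.sign (((i : ℝ) + 1 / 2) * Δx - (k : ℝ) * Δx) := by
      apply tsum_eq_sum
      intro b hb
      simp only [Finset.mem_insert, Finset.mem_singleton, not_or] at hb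
      rw [hzero b hb.1 hb.2, zero_mul]
    rw [hts, Finset.sum_pair hne, sgn_val Δx hΔx i i1, sgn_val Δx hΔx i i2, hi1, hi2]
    rcases lt_trichotomy i i1 with h | h | h
    · rw [if_neg (by omega), if_neg (by omega), if_pos h]; ring
    · rw [if_pos (by omega), if_neg (by omega), if_neg (by omega), if_pos (by omega)]; ring
    · rcases lt_or_ge i i2 with h2 | h2
      · rw [if_pos (by omega), if_neg (by omega), if_neg (by omega), if_pos h2]; ring
      · rw [if_pos (by omega), if_pos (by omega), if_neg (by omega), if_neg (by omega)]; ring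
  intro i
  rw [hρ' i, hah' i, hah' (i - 1)]
  have p1 : pos (1 : ℝ) = 1 := by norm_num [pos]
  have p0 : pos (0 : ℝ) = 0 := by norm_num [pos]
  have pm : pos (-1 : ℝ) = 0 := by norm_num [pos]
  have n1 : neg (1 : ℝ) = 0 := by norm_num [neg]
  have n0 : neg (0 : ℝ) = 0 := by norm_num [neg]
  have nm : neg (-1 : ℝ) = 1 := by norm_num [neg]
  rcases lt_trichotomy i i1 with h | h | h
  · rw [if_pos h, if_pos (by omega), p1, n1]
    rw [hzero i (by omega) (by omega), hzero (i - 1) (by omega) (by omega)]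
    ring
  · rw [if_neg (by omega), if_pos (by omega), if_pos (by omega), p0, n0, p1, n1]
    rw [hzero (i - 1) (by omega) (by omega)]
    ring
  · rcases lt_trichotomy i i2 with h2 | h2 | h2
    · rw [if_neg (by omega), if_pos h2, if_neg (by omega), if_pos (by omega), p0, n0]
      ring
    · rw [if_neg (by omega), if_neg (by omega), pm, nm]
      rw [if_neg (by omega), if_pos (by omega), p0, n0]
      rw [hzero (i + 1) (by omega) (by omega)]
      ring
    · rw [if_neg (by omega), if_neg (by omega), pm, nm]
      rcases eq_or_lt_of_le (Int.add_one_le_iff.mpr h2) with he | hl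
      · rw [if_neg (by omega), if_neg (by omega), pm, nm]
        rw [hzero i (by omega) (by omega), hzero (i + 1) (by omega) (by omega)]
        ring
      · rw [if_neg (by omega), if_neg (by omega), pm, nm]
        rw [hzero i (by omega) (by omega), hzero (i + 1) (by omega) (by omega)]
        ring
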